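/- For j ∈ ℕ, let Z = (Z_1,...,Z_j) and Z' = (Z'_1,...,Z'_j) be two sequences of {0,1}-valued random variables (on possibly different probability spaces). Then there exists a coupling of Z and Z' such that P(Z = Z') ≥ 1 − Σ_{i=1}^{j} Σ_{k≠i} (E[Z_k Z_i] + E[Z'_k Z'_i]) − Σ_{i=1}^{j} |E[Z_i] − E[Z'_i]|. -/

import Mathlib

open MeasureTheory
open scoped ENNReal

section Coupling
variable {α : Type*} [MeasurableSpace α] [Fintype α] [MeasurableSingletonClass α]

lemma sumdirac_apply (w : α → ℝ≥0∞) (s : Set α) :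
    (∑ b : α, w b • Measure.dirac b) s = ∑ b : α, w b * s.indicator 1 b := by
  rw [Measure.finset_sum_apply]
  simp [Measure.dirac_apply]

lemma sumdirac_apply_singleton (w : α → ℝ≥0∞) (c : α) :
    (∑ b : α, w b • Measure.dirac b) {c} = w c := by
  rw [sumdirac_apply]
  rw [Finset.sum_eq_single c]
  · simp
  · intro b _ hb
    simp [Set.indicator_apply, hb]
  · simp

lemma sumdirac_univ (w : α → ℝ≥0∞) :
    (∑ b : α, w b • Measure.dirac b) Set.univ = ∑ b : α, w b := by
  rw [sumdirac_apply]; simp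

lemma sum_meas_singleton (μ : Measure α) : ∑ b : α, μ {b} = μ Set.univ := by
  have := MeasureTheory.sum_measure_preimage_singleton (μ := μ) (f := id)
      (Finset.univ : Finset α) (fun y _ => by simp)
  simpa using this

theorem exists_coupling_discrete (p q : Measure α)
    [IsProbabilityMeasure p] [IsProbabilityMeasure q] :
    ∃ m : Measure (α × α), IsProbabilityMeasure m ∧
      m.map Prod.fst = p ∧ m.map Prod.snd = q ∧
      1 ≤ m {x | x.1 = x.2} + ∑ b : α, (p {b} - q {b}) := by
  classical
  set d : α → ℝ≥0∞ := fun b => p {b} - q {b} with hd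
  set e : α → ℝ≥0∞ := fun b => q {b} - p {b} with he
  set t : ℝ≥0∞ := ∑ b : α, d b with ht
  set μd : Measure α := ∑ b : α, d b • Measure.dirac b with hμd
  set νd : Measure α := ∑ b : α, e b • Measure.dirac b with hνd
  set diag : Measure (α × α) := ∑ b : α, (min (p {b}) (q {b})) • Measure.dirac (b, b) with hdiag
  set m : Measure (α × α) := diag + t⁻¹ • (μd.prod νd) with hm
  -- basic facts
  have hp1 : ∑ b : α, p {b} = 1 := by rw [sum_meas_singleton]; simp
  have hq1 : ∑ b : α, q {b} = 1 := by rw [sum_meas_singleton]; simp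
  have hmin_add_d : ∀ b, min (p {b}) (q {b}) + d b = p {b} := by
    intro b
    rcases le_total (p {b}) (q {b}) with h | h
    · simp [hd, min_eq_left h, tsub_eq_zero_of_le h]
    · rw [min_eq_right h]
      show q {b} + (p {b} - q {b}) = p {b}
      exact add_tsub_cancel_of_le h
  have hmin_add_e : ∀ b, min (p {b}) (q {b}) + e b = q {b} := by
    intro b
    rcases le_total (q {b}) (p {b}) with h | h
    · simp [he, min_eq_right h, tsub_eq_zero_of_le h]
    · rw [min_eq_left h]
      show p {b} + (q {b} - p {b}) = q {b}
      exact add_tsub_cancel_of_le h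
  have hsum_min_t : (∑ b : α, min (p {b}) (q {b})) + t = 1 := by
    rw [ht, ← Finset.sum_add_distrib]
    simp_rw [hmin_add_d]; exact hp1
  have hsum_min_t' : (∑ b : α, min (p {b}) (q {b})) + (∑ b : α, e b) = 1 := by
    rw [← Finset.sum_add_distrib]
    simp_rw [hmin_add_e]; exact hq1
  have hminfin : (∑ b : α, min (p {b}) (q {b})) ≠ ⊤ := by
    intro h; rw [h] at hsum_min_t; simp at hsum_min_t
  have htt' : t = ∑ b : α, e b := by
    have := hsum_min_t.trans hsum_min_t'.symm
    exact (ENNReal.add_right_inj hminfin).mp this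
  have ht1 : t ≤ 1 := le_of_le_of_eq le_add_self hsum_min_t
  have htfin : t ≠ ⊤ := (lt_of_le_of_lt ht1 (by norm_num)).ne
  have hμd_univ : μd Set.univ = t := by rw [hμd, sumdirac_univ, ht]
  have hνd_univ : νd Set.univ = t := by rw [hνd, sumdirac_univ, htt']
  have hfin : IsFiniteMeasure νd := ⟨by rw [hνd_univ]; exact lt_of_le_of_lt ht1 (by norm_num)⟩
  -- key: t⁻¹ * (x * t) = x when x ≤ t (handles t = 0)
  have hcanc : ∀ x : ℝ≥0∞, x ≤ t → t⁻¹ * (x * t) = x := by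
    intro x hx
    rcases eq_or_ne t 0 with h0 | h0
    · simp [h0, le_antisymm (h0 ▸ hx) zero_le]
    · rw [mul_comm x t, ← mul_assoc, ENNReal.inv_mul_cancel h0 htfin, one_mul]
  have hdle : ∀ b, d b ≤ t := fun b => Finset.single_le_sum (f := d) (fun _ _ => zero_le) (Finset.mem_univ b)
  have hele : ∀ b, e b ≤ t := by
    intro b; rw [htt']; exact Finset.single_le_sum (f := e) (fun _ _ => zero_le) (Finset.mem_univ b)
  -- diag applied to sets
  have hdiag_apply : ∀ s : Set (α × α), diag s = ∑ b : α, (min (p {b}) (q {b})) * s.indicator 1 (b, b) := by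
    intro s
    rw [hdiag, Measure.finset_sum_apply]
    simp [Measure.dirac_apply]
  -- marginal fst
  have hmfst : m.map Prod.fst = p := by
    rw [Measure.ext_iff_singleton]
    intro b
    rw [Measure.map_apply measurable_fst (measurableSet_singleton b)]
    have hset : (Prod.fst ⁻¹' {b} : Set (α × α)) = {b} ×ˢ Set.univ := by
      ext ⟨x1, x2⟩; simp [eq_comm, Prod.ext_iff]
    rw [hm, Measure.add_apply, hdiag_apply, Measure.smul_apply, smul_eq_mul, hset,
      Measure.prod_prod, hμd, sumdirac_apply_singleton, hνd_univ]
    rw [Finset.sum_eq_single b]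
    · rw [hcanc _ (hdle b)]
      simpa using hmin_add_d b
    · intro c _ hc
      have : (c, c) ∉ ({b} ×ˢ Set.univ : Set (α × α)) := by simp [Ne.symm hc, hc]
      simp [Set.indicator_apply, this, Ne.symm hc]
    · simp
  have hmsnd : m.map Prod.snd = q := by
    rw [Measure.ext_iff_singleton]
    intro b
    rw [Measure.map_apply measurable_snd (measurableSet_singleton b)]
    have hset : (Prod.snd ⁻¹' {b} : Set (α × α)) = Set.univ ×ˢ {b} := by
      ext ⟨x1, x2⟩; simp [eq_comm, Prod.ext_iff]
    rw [hm, Measure.add_apply, hdiag_apply, Measure.smul_apply, smul_eq_mul, hset,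
      Measure.prod_prod, hνd, sumdirac_apply_singleton, hμd_univ]
    rw [Finset.sum_eq_single b]
    · rw [mul_comm t, hcanc _ (hele b)]
      simpa using hmin_add_e b
    · intro c _ hc
      have : (c, c) ∉ (Set.univ ×ˢ {b} : Set (α × α)) := by simp [Ne.symm hc, hc]
      simp [Set.indicator_apply, this, Ne.symm hc]
    · simp
  have hmuniv : m Set.univ = 1 := by
    rw [hm, Measure.add_apply, hdiag_apply, Measure.smul_apply, smul_eq_mul,
      ← Set.univ_prod_univ, Measure.prod_prod, hμd_univ, hνd_univ, hcanc t le_rfl]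
    simpa using hsum_min_t
  have hdiagset : diag {x : α × α | x.1 = x.2} = ∑ b : α, min (p {b}) (q {b}) := by
    rw [hdiag_apply]
    congr 1; ext b
    simp [Set.indicator_apply]
  refine ⟨m, ⟨hmuniv⟩, hmfst, hmsnd, ?_⟩
  calc (1 : ℝ≥0∞) = (∑ b : α, min (p {b}) (q {b})) + t := hsum_min_t.symm
    _ ≤ m {x : α × α | x.1 = x.2} + t := by
        gcongr
        rw [← hdiagset, hm]
        exact le_add_right le_rfl |>.trans (le_of_eq (Measure.add_apply _ _ _).symm)
    _ = _ := rfl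

end Coupling
open Finset

section Core
variable {j : ℕ}

private def indR (c : Prop) [Decidable c] : ℝ := if c then 1 else 0

private lemma indR_nonneg (c : Prop) [Decidable c] : 0 ≤ indR c := by
  unfold indR; split <;> norm_num

private lemma indR_le_one (c : Prop) [Decidable c] : indR c ≤ 1 := by
  unfold indR; split <;> norm_num

private def minsP (i : Fin j) (b : Fin j → Bool) : Prop :=
  b i = true ∧ ∀ k, k < i → b k = false

private instance (i : Fin j) (b : Fin j → Bool) : Decidable (minsP i b) := by
  unfold minsP; infer_instance

private def Emap (i : Fin j) : Fin j → Bool := fun k => decide (k = i)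

private def Nb (b : Fin j → Bool) : ℕ := (Finset.univ.filter (fun i => b i = true)).card

private lemma minsP_unique {b : Fin j → Bool} {i i' : Fin j}
    (h : minsP i b) (h' : minsP i' b) : i = i' := by
  rcases lt_trichotomy i i' with hlt | he | hgt
  · exact absurd h.1 (by rw [h'.2 i hlt]; simp)
  · exact he
  · exact absurd h'.1 (by rw [h.2 i' hgt]; simp)

private lemma minsP_exists {b : Fin j → Bool} (h : ∃ i, b i = true) :
    ∃ i, minsP i b := by
  classical
  obtain ⟨i0, hi0⟩ := h
  set T : Finset (Fin j) := Finset.univ.filter (fun i => b i = true) with hT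
  have hTne : T.Nonempty := ⟨i0, by simp [hT, hi0]⟩
  refine ⟨T.min' hTne, ?_, ?_⟩
  · have := T.min'_mem hTne
    simpa [hT] using this
  · intro k hk
    by_contra hkb
    have hkT : k ∈ T := by simp [hT]; simpa using hkb
    exact absurd (T.min'_le k hkT) (not_le.mpr hk)

private lemma sum_indR_minsP (b : Fin j → Bool) :
    ∑ i : Fin j, indR (minsP i b) = indR (∃ i, b i = true) := by
  classical
  by_cases h : ∃ i, b i = true
  · obtain ⟨i0, hi0⟩ := minsP_exists h
    rw [Finset.sum_eq_single i0]
    · simp [indR, hi0, h]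
    · intro i _ hne
      have : ¬ minsP i b := fun hm => hne (minsP_unique hm hi0)
      simp [indR, this]
    · simp
  · have : ∀ i : Fin j, ¬ minsP i b := by
      intro i hm; exact h ⟨i, hm.1⟩
    simp [indR, this, h]

private lemma minsP_Emap (i : Fin j) : minsP i (Emap i) := by
  constructor
  · simp [Emap]
  · intro k hk
    simp [Emap]; exact fun h => absurd h (ne_of_lt hk)

private lemma Emap_injective : Function.Injective (Emap (j := j)) := by
  intro i i' h
  have := congrFun h i
  simp [Emap] at this
  exact this

private lemma Nb_eq_zero_iff (b : Fin j → Bool) : Nb b = 0 ↔ b = (fun _ => false) := by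
  unfold Nb
  rw [Finset.card_eq_zero, Finset.filter_eq_empty_iff]
  constructor
  · intro h; funext i
    have := h (Finset.mem_univ i)
    simpa using this
  · intro h i _
    rw [h]; simp

private lemma Nb_eq_one_iff (b : Fin j → Bool) : Nb b = 1 ↔ ∃ i, b = Emap i := by
  unfold Nb
  rw [Finset.card_eq_one]
  constructor
  · rintro ⟨i, hi⟩
    refine ⟨i, funext fun k => ?_⟩
    have : k ∈ Finset.univ.filter (fun i => b i = true) ↔ k ∈ ({i} : Finset (Fin j)) := by
      rw [hi]
    simp at this
    simp [Emap]
    by_cases hk : k = i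
    · subst hk
      simp
      exact this.mpr rfl
    · simp [hk]
      rw [← Bool.not_eq_true]
      intro hb
      exact hk (this.mp hb)
  · rintro ⟨i, rfl⟩
    refine ⟨i, ?_⟩
    ext k
    simp [Emap]

private lemma sum_indR_bi (b : Fin j → Bool) :
    ∑ i : Fin j, indR (b i = true) = (Nb b : ℝ) := by
  unfold indR Nb
  rw [Finset.sum_boole]

end Core

section Core2
variable {j : ℕ}

private lemma indR_and (c d : Prop) [Decidable c] [Decidable d] :
    indR (c ∧ d) = indR c * indR d := by
  unfold indR
  by_cases hc : c <;> by_cases hd : d <;> simp [hc, hd]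

private lemma indR_mono {c d : Prop} [Decidable c] [Decidable d] (h : c → d) :
    indR c ≤ indR d := by
  unfold indR
  by_cases hc : c <;> simp [hc, h] <;> split <;> norm_num

private lemma pos_add_pos_neg (x : ℝ) : max x 0 + max (-x) 0 = |x| := by
  rcases le_total x 0 with h | h
  · rw [max_eq_right h, max_eq_left (by linarith), abs_of_nonpos h]; ring
  · rw [max_eq_left h, max_eq_right (by linarith), abs_of_nonneg h]; ring

private lemma exists_true_iff_Nb (b : Fin j → Bool) : (∃ i, b i = true) ↔ 1 ≤ Nb b := by
  rw [Nat.one_le_iff_ne_zero, Ne, Nb_eq_zero_iff]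
  constructor
  · rintro ⟨i, hi⟩ h
    rw [h] at hi; simp at hi
  · intro h
    by_contra hne
    exact h (funext fun i => by simpa using (hne ⟨i, ·⟩))

/-- ∑_i ∑_{k ≠ i} [b k ∧ b i] = N(N-1) -/
private lemma W_eq (b : Fin j → Bool) :
    ∑ i : Fin j, ∑ k ∈ Finset.univ.erase i, indR (b k = true ∧ b i = true)
      = (Nb b : ℝ) * ((Nb b : ℝ) - 1) := by
  have h1 : ∀ i : Fin j, ∑ k ∈ Finset.univ.erase i, indR (b k = true)
      = (Nb b : ℝ) - indR (b i = true) := by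
    intro i
    have := Finset.add_sum_erase Finset.univ (fun k => indR (b k = true)) (Finset.mem_univ i)
    have h2 := sum_indR_bi b
    linarith [this, h2]
  calc ∑ i : Fin j, ∑ k ∈ Finset.univ.erase i, indR (b k = true ∧ b i = true)
      = ∑ i : Fin j, ((Nb b : ℝ) - indR (b i = true)) * indR (b i = true) := by
        refine Finset.sum_congr rfl fun i _ => ?_
        rw [← h1 i, Finset.sum_mul]
        exact Finset.sum_congr rfl fun k _ => indR_and _ _
    _ = ∑ i : Fin j, ((Nb b : ℝ) - 1) * indR (b i = true) := by
        refine Finset.sum_congr rfl fun i _ => ?_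
        by_cases h : b i = true <;> simp [indR, h]
    _ = ((Nb b : ℝ) - 1) * (Nb b : ℝ) := by rw [← Finset.mul_sum, sum_indR_bi]
    _ = _ := by ring

/-- pointwise coefficient inequality -/
private lemma coeff_ineq (b : Fin j → Bool) :
    indR (2 ≤ Nb b) + ((Nb b : ℝ) - indR (∃ i, b i = true))
      ≤ (Nb b : ℝ) * ((Nb b : ℝ) - 1) := by
  rcases Nat.lt_or_ge (Nb b) 1 with h | h
  · interval_cases h' : (Nb b)
    · have h0 : ¬ (∃ i, b i = true) := by
        rw [exists_true_iff_Nb, h']; norm_num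
      simp [indR, h0, h']
  · have hex : (∃ i, b i = true) := (exists_true_iff_Nb b).mpr h
    rcases Nat.lt_or_ge (Nb b) 2 with h2 | h2
    · have h1 : Nb b = 1 := le_antisymm (by omega) h
      simp [indR, hex, h1]
    · have : indR (2 ≤ Nb b) = 1 := by simp [indR, h2]
      rw [this]
      have hcast : (2 : ℝ) ≤ (Nb b : ℝ) := by exact_mod_cast h2
      have : indR (∃ i, b i = true) = 1 := by simp [indR, hex]
      rw [this]
      nlinarith

end Core2

section Core3
variable {j : ℕ}

private def Pw (p : (Fin j → Bool) → ℝ) (i : Fin j) : ℝ :=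
  ∑ b : Fin j → Bool, p b * indR (minsP i b)

private def aw (p : (Fin j → Bool) → ℝ) (i : Fin j) : ℝ :=
  ∑ b : Fin j → Bool, p b * indR (b i = true)

private def cw (p : (Fin j → Bool) → ℝ) (k i : Fin j) : ℝ :=
  ∑ b : Fin j → Bool, p b * indR (b k = true ∧ b i = true)

private def Dw (p : (Fin j → Bool) → ℝ) : ℝ :=
  ∑ b : Fin j → Bool, p b * indR (2 ≤ Nb b)

variable {p : (Fin j → Bool) → ℝ}

private lemma Pw_le_aw (hp : ∀ b, 0 ≤ p b) (i : Fin j) : Pw p i ≤ aw p i := by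
  refine Finset.sum_le_sum fun b _ => ?_
  exact mul_le_mul_of_nonneg_left (indR_mono fun h => h.1) (hp b)

private lemma pE_le_Pw (hp : ∀ b, 0 ≤ p b) (i : Fin j) : p (Emap i) ≤ Pw p i := by
  have h := Finset.single_le_sum (f := fun b => p b * indR (minsP i b))
    (fun b _ => mul_nonneg (hp b) (indR_nonneg _)) (Finset.mem_univ (Emap i))
  calc p (Emap i) = p (Emap i) * indR (minsP i (Emap i)) := by
        simp [indR, minsP_Emap i]
    _ ≤ Pw p i := h

private lemma sum_p_eq_self (c : Fin j → Bool) :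
    ∑ b : Fin j → Bool, p b * indR (b = c) = p c := by
  rw [Finset.sum_eq_single c]
  · simp [indR]
  · intro b _ hb; simp [indR, hb]
  · simp

private lemma sum_Pw (hp1 : ∑ b : Fin j → Bool, p b = 1) :
    ∑ i : Fin j, Pw p i = 1 - p (fun _ => false) := by
  unfold Pw
  rw [Finset.sum_comm]
  have key : ∀ b : Fin j → Bool, ∑ i : Fin j, p b * indR (minsP i b)
      = p b - p b * indR (b = fun _ => false) := by
    intro b
    rw [← Finset.mul_sum, sum_indR_minsP]
    have hzb : (b = fun _ => false) ↔ ¬ (∃ i, b i = true) := by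
      rw [exists_true_iff_Nb, not_le, Nat.lt_one_iff, Nb_eq_zero_iff]
    by_cases h : ∃ i, b i = true
    · have : ¬ (b = fun _ => false) := fun hb => (hzb.mp hb) h
      simp [indR, h, this]
    · simp [indR, h, hzb.mpr h]
  rw [Finset.sum_congr rfl fun b _ => key b, Finset.sum_sub_distrib, hp1,
    sum_p_eq_self]

private lemma stepC (hp : ∀ b, 0 ≤ p b) :
    Dw p + ∑ i : Fin j, (aw p i - Pw p i)
      ≤ ∑ i : Fin j, ∑ k ∈ Finset.univ.erase i, cw p k i := by
  have h1 : ∑ i : Fin j, (aw p i - Pw p i)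
      = ∑ b : Fin j → Bool, p b * ((Nb b : ℝ) - indR (∃ i, b i = true)) := by
    unfold aw Pw
    calc ∑ i : Fin j, ((∑ b : Fin j → Bool, p b * indR (b i = true))
            - ∑ b : Fin j → Bool, p b * indR (minsP i b))
        = ∑ i : Fin j, ∑ b : Fin j → Bool,
            (p b * indR (b i = true) - p b * indR (minsP i b)) := by
          exact Finset.sum_congr rfl fun i _ => (Finset.sum_sub_distrib _ _).symm
      _ = ∑ b : Fin j → Bool, ∑ i : Fin j,
            (p b * indR (b i = true) - p b * indR (minsP i b)) := Finset.sum_comm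
      _ = _ := by
          refine Finset.sum_congr rfl fun b _ => ?_
          simp_rw [← mul_sub, ← Finset.mul_sum]
          rw [Finset.sum_sub_distrib, sum_indR_bi, sum_indR_minsP]
  have h2 : ∑ i : Fin j, ∑ k ∈ Finset.univ.erase i, cw p k i
      = ∑ b : Fin j → Bool, p b * ((Nb b : ℝ) * ((Nb b : ℝ) - 1)) := by
    unfold cw
    calc ∑ i : Fin j, ∑ k ∈ Finset.univ.erase i,
            ∑ b : Fin j → Bool, p b * indR (b k = true ∧ b i = true)
        = ∑ i : Fin j, ∑ b : Fin j → Bool,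
            ∑ k ∈ Finset.univ.erase i, p b * indR (b k = true ∧ b i = true) := by
          exact Finset.sum_congr rfl fun i _ => Finset.sum_comm
      _ = ∑ b : Fin j → Bool, ∑ i : Fin j,
            ∑ k ∈ Finset.univ.erase i, p b * indR (b k = true ∧ b i = true) := Finset.sum_comm
      _ = _ := by
          refine Finset.sum_congr rfl fun b _ => ?_
          simp_rw [← Finset.mul_sum]
          rw [W_eq]
  rw [h1, h2, Dw, ← Finset.sum_add_distrib]
  refine Finset.sum_le_sum fun b _ => ?_
  rw [← mul_add]
  exact mul_le_mul_of_nonneg_left (coeff_ineq b) (hp b)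

/-- residual bound: ∑_i (Pw q i - q (Emap i)) ≤ Dw q -/
private lemma residual_le_Dw (hp : ∀ b, 0 ≤ p b) :
    ∑ i : Fin j, (Pw p i - p (Emap i)) ≤ Dw p := by
  have h1 : ∀ i : Fin j, Pw p i - p (Emap i)
      = ∑ b : Fin j → Bool, p b * indR (minsP i b ∧ b ≠ Emap i) := by
    intro i
    unfold Pw
    rw [← sum_p_eq_self (p := p) (Emap i), ← Finset.sum_sub_distrib]
    refine Finset.sum_congr rfl fun b _ => ?_
    rw [← mul_sub]
    congr 1
    by_cases hb : b = Emap i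
    · subst hb
      simp [indR, minsP_Emap i]
    · by_cases hm : minsP i b <;> simp [indR, hm, hb]
  have h2 : ∀ b : Fin j → Bool,
      ∑ i : Fin j, indR (minsP i b ∧ b ≠ Emap i) ≤ indR (2 ≤ Nb b) := by
    intro b
    by_cases hex : ∃ i, minsP i b ∧ b ≠ Emap i
    · obtain ⟨i0, hi0⟩ := hex
      have hsum : ∑ i : Fin j, indR (minsP i b ∧ b ≠ Emap i) = 1 := by
        rw [Finset.sum_eq_single i0]
        · simp [indR, hi0]
        · intro i _ hne
          have : ¬ (minsP i b ∧ b ≠ Emap i) := fun hm => hne (minsP_unique hm.1 hi0.1)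
          simp [indR, this]
        · simp
      rw [hsum]
      have h2N : 2 ≤ Nb b := by
        have h1N : 1 ≤ Nb b := (exists_true_iff_Nb b).mp ⟨i0, hi0.1.1⟩
        rcases Nat.lt_or_ge (Nb b) 2 with hlt | hge
        · exfalso
          have hN1 : Nb b = 1 := by omega
          obtain ⟨i', hi'⟩ := (Nb_eq_one_iff b).mp hN1
          have : i0 = i' := minsP_unique hi0.1 (hi' ▸ minsP_Emap i')
          exact hi0.2 (this ▸ hi')
        · exact hge
      simp [indR, h2N]
    · push_neg at hex
      have : ∀ i : Fin j, indR (minsP i b ∧ b ≠ Emap i) = 0 := by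
        intro i
        have := hex i
        simp only [indR, ite_eq_right_iff]
        intro hc
        exact absurd (this hc.1) (by simpa using hc.2)
      rw [Finset.sum_congr rfl fun i _ => this i]
      simp [indR_nonneg]
  calc ∑ i : Fin j, (Pw p i - p (Emap i))
      = ∑ i : Fin j, ∑ b : Fin j → Bool, p b * indR (minsP i b ∧ b ≠ Emap i) := by
        exact Finset.sum_congr rfl fun i _ => h1 i
    _ = ∑ b : Fin j → Bool, ∑ i : Fin j, p b * indR (minsP i b ∧ b ≠ Emap i) := Finset.sum_comm
    _ ≤ Dw p := by
        unfold Dw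
        refine Finset.sum_le_sum fun b _ => ?_
        rw [← Finset.mul_sum]
        exact mul_le_mul_of_nonneg_left (h2 b) (hp b)

private lemma Nb_Emap (i : Fin j) : Nb (Emap i) = 1 := (Nb_eq_one_iff _).mpr ⟨i, rfl⟩

private lemma Dw_eq_filter : Dw p = ∑ b ∈ Finset.univ.filter (fun b => 2 ≤ Nb b), p b := by
  unfold Dw
  rw [Finset.sum_filter]
  refine Finset.sum_congr rfl fun b _ => ?_
  by_cases h : 2 ≤ Nb b <;> simp [indR, h]

private lemma stepA {q : (Fin j → Bool) → ℝ}
    (hp : ∀ b, 0 ≤ p b) (hq : ∀ b, 0 ≤ q b)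
    (hp1 : ∑ b : Fin j → Bool, p b = 1) (hq1 : ∑ b : Fin j → Bool, q b = 1) :
    ∑ b : Fin j → Bool, max (p b - q b) 0
      ≤ Dw p + Dw q + ∑ i : Fin j, |Pw p i - Pw q i| := by
  classical
  set z : Fin j → Bool := fun _ => false with hz
  set T : Finset (Fin j → Bool) := insert z (Finset.univ.image Emap) with hT
  have hmemT : ∀ b : Fin j → Bool, b ∈ T ↔ Nb b ≤ 1 := by
    intro b
    simp only [hT, Finset.mem_insert, Finset.mem_image, Finset.mem_univ, true_and]
    constructor
    · rintro (rfl | ⟨i, rfl⟩)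
      · have h0 : Nb z = 0 := (Nb_eq_zero_iff z).mpr rfl
        omega
      · rw [Nb_Emap]
    · intro h
      rcases Nat.le_one_iff_eq_zero_or_eq_one.mp h with h0 | h1
      · exact Or.inl ((Nb_eq_zero_iff b).mp h0)
      · obtain ⟨i, hi⟩ := (Nb_eq_one_iff b).mp h1
        exact Or.inr ⟨i, hi.symm⟩
  have hfilter : Finset.univ.filter (fun b : Fin j → Bool => Nb b ≤ 1) = T := by
    ext b; simp [hmemT b]
  have hsplit := Finset.sum_filter_add_sum_filter_not Finset.univ
    (fun b : Fin j → Bool => Nb b ≤ 1) (fun b => max (p b - q b) 0)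
  have hT2 : ∑ b ∈ T, max (p b - q b) 0
      = max (p z - q z) 0 + ∑ i : Fin j, max (p (Emap i) - q (Emap i)) 0 := by
    rw [hT, Finset.sum_insert, Finset.sum_image (fun a _ b _ h => Emap_injective h)]
    intro hmem
    obtain ⟨i, _, hi⟩ := Finset.mem_image.mp hmem
    have h1 : Nb z = 1 := by rw [← hi]; exact Nb_Emap i
    have h0 : Nb z = 0 := (Nb_eq_zero_iff z).mpr rfl
    omega
  have hNS : ∑ b ∈ Finset.univ.filter (fun b : Fin j → Bool => ¬ Nb b ≤ 1),
      max (p b - q b) 0 ≤ Dw p := by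
    rw [Dw_eq_filter]
    have : Finset.univ.filter (fun b : Fin j → Bool => ¬ Nb b ≤ 1)
        = Finset.univ.filter (fun b : Fin j → Bool => 2 ≤ Nb b) := by
      apply Finset.filter_congr
      intro b _
      constructor <;> (intro h; omega)
    rw [this]
    refine Finset.sum_le_sum fun b _ => ?_
    exact max_le (by linarith [hq b]) (hp b)
  have hzbound : max (p z - q z) 0 ≤ ∑ i : Fin j, max (Pw q i - Pw p i) 0 := by
    have hpz : p z = 1 - ∑ i : Fin j, Pw p i := by
      have := sum_Pw (p := p) hp1; rw [← hz] at this; linarith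
    have hqz : q z = 1 - ∑ i : Fin j, Pw q i := by
      have := sum_Pw (p := q) hq1; rw [← hz] at this; linarith
    apply max_le
    · rw [hpz, hqz]
      have : (1 - ∑ i : Fin j, Pw p i) - (1 - ∑ i : Fin j, Pw q i)
          = ∑ i : Fin j, (Pw q i - Pw p i) := by
        rw [Finset.sum_sub_distrib]; ring
      rw [this]
      exact Finset.sum_le_sum fun i _ => le_max_left _ 0
    · exact Finset.sum_nonneg fun i _ => le_max_right _ 0
  have hEbound : ∑ i : Fin j, max (p (Emap i) - q (Emap i)) 0
      ≤ ∑ i : Fin j, (max (Pw p i - Pw q i) 0 + (Pw q i - q (Emap i))) := by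
    refine Finset.sum_le_sum fun i _ => ?_
    have hrq : 0 ≤ Pw q i - q (Emap i) := by linarith [pE_le_Pw (p := q) hq i]
    have hrp : 0 ≤ Pw p i - p (Emap i) := by linarith [pE_le_Pw (p := p) hp i]
    apply max_le
    · have : p (Emap i) - q (Emap i) ≤ (Pw p i - Pw q i) + (Pw q i - q (Emap i)) := by
        linarith
      calc p (Emap i) - q (Emap i) ≤ (Pw p i - Pw q i) + (Pw q i - q (Emap i)) := this
        _ ≤ max (Pw p i - Pw q i) 0 + (Pw q i - q (Emap i)) := by
            linarith [le_max_left (Pw p i - Pw q i) (0:ℝ)]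
    · exact add_nonneg (le_max_right _ 0) hrq
  have habs : ∀ i : Fin j, max (Pw p i - Pw q i) 0 + max (Pw q i - Pw p i) 0
      = |Pw p i - Pw q i| := by
    intro i
    have := pos_add_pos_neg (Pw p i - Pw q i)
    rw [neg_sub] at this
    exact this
  have hres := residual_le_Dw (p := q) hq
  calc ∑ b : Fin j → Bool, max (p b - q b) 0
      = ∑ b ∈ T, max (p b - q b) 0
        + ∑ b ∈ Finset.univ.filter (fun b : Fin j → Bool => ¬ Nb b ≤ 1),
            max (p b - q b) 0 := by rw [← hsplit, hfilter]
    _ ≤ (max (p z - q z) 0 + ∑ i : Fin j, max (p (Emap i) - q (Emap i)) 0) + Dw p := by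
        rw [hT2]; linarith
    _ ≤ (∑ i : Fin j, max (Pw q i - Pw p i) 0
          + ∑ i : Fin j, (max (Pw p i - Pw q i) 0 + (Pw q i - q (Emap i)))) + Dw p := by
        linarith
    _ = Dw p + (∑ i : Fin j, (max (Pw p i - Pw q i) 0 + max (Pw q i - Pw p i) 0))
          + ∑ i : Fin j, (Pw q i - q (Emap i)) := by
        rw [Finset.sum_add_distrib, Finset.sum_add_distrib]; ring
    _ ≤ Dw p + Dw q + ∑ i : Fin j, |Pw p i - Pw q i| := by
        rw [Finset.sum_congr rfl fun i _ => habs i]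
        linarith

private theorem core_ineq (p q : (Fin j → Bool) → ℝ)
    (hp : ∀ b, 0 ≤ p b) (hq : ∀ b, 0 ≤ q b)
    (hp1 : ∑ b : Fin j → Bool, p b = 1) (hq1 : ∑ b : Fin j → Bool, q b = 1) :
    ∑ b : Fin j → Bool, max (p b - q b) 0
      ≤ (∑ i : Fin j, ∑ k ∈ Finset.univ.erase i, (cw p k i + cw q k i))
        + ∑ i : Fin j, |aw p i - aw q i| := by
  have hA := stepA hp hq hp1 hq1
  have hB : ∑ i : Fin j, |Pw p i - Pw q i|
      ≤ ∑ i : Fin j, |aw p i - aw q i|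
        + (∑ i : Fin j, (aw p i - Pw p i) + ∑ i : Fin j, (aw q i - Pw q i)) := by
    rw [← Finset.sum_add_distrib, ← Finset.sum_add_distrib]
    refine Finset.sum_le_sum fun i _ => ?_
    have h1 : Pw p i ≤ aw p i := Pw_le_aw hp i
    have h2 : Pw q i ≤ aw q i := Pw_le_aw hq i
    have h3 := le_abs_self (aw p i - aw q i)
    have h4 := neg_abs_le (aw p i - aw q i)
    rw [abs_sub_le_iff]
    constructor <;> linarith
  have hCp := stepC (p := p) hp
  have hCq := stepC (p := q) hq
  have hsum : ∑ i : Fin j, ∑ k ∈ Finset.univ.erase i, (cw p k i + cw q k i)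
      = (∑ i : Fin j, ∑ k ∈ Finset.univ.erase i, cw p k i)
        + ∑ i : Fin j, ∑ k ∈ Finset.univ.erase i, cw q k i := by
    rw [← Finset.sum_add_distrib]
    exact Finset.sum_congr rfl fun i _ => by rw [← Finset.sum_add_distrib]
  rw [hsum]
  linarith

end Core3
section Main
open MeasureTheory
open scoped ENNReal

private def iotaR {j : ℕ} (b : Fin j → Bool) : Fin j → ℝ := fun i => if b i = true then 1 else 0

private lemma iotaR_injective {j : ℕ} : Function.Injective (iotaR (j := j)) := by
  intro b b' h
  funext i
  have := congrFun h i
  unfold iotaR at this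
  by_cases hb : b i = true <;> by_cases hb' : b' i = true
  · rw [hb, hb']
  · norm_num [hb, hb'] at this
  · norm_num [hb, hb'] at this
  · rw [Bool.not_eq_true] at hb hb'; rw [hb, hb']

theorem coupling_of_binary_vectors
    {Ω Ω' : Type*} [MeasurableSpace Ω] [MeasurableSpace Ω']
    (P : Measure Ω) (P' : Measure Ω') [IsProbabilityMeasure P] [IsProbabilityMeasure P']
    (j : ℕ) (Z : Ω → Fin j → ℝ) (Z' : Ω' → Fin j → ℝ)
    (hZ : Measurable Z) (hZ' : Measurable Z')
    (hZ01 : ∀ ω i, Z ω i = 0 ∨ Z ω i = 1) (hZ'01 : ∀ ω i, Z' ω i = 0 ∨ Z' ω i = 1) :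
    ∃ (Ω'' : Type) (_ : MeasurableSpace Ω'') (P'' : Measure Ω'')
      (X Y : Ω'' → Fin j → ℝ),
      IsProbabilityMeasure P'' ∧ Measurable X ∧ Measurable Y ∧
      P''.map X = P.map Z ∧ P''.map Y = P'.map Z' ∧
      1 - (∑ i : Fin j, ∑ k ∈ Finset.univ.erase i,
              ((∫ ω, Z ω k * Z ω i ∂P) + (∫ ω, Z' ω k * Z' ω i ∂P'))) -
          (∑ i : Fin j, |(∫ ω, Z ω i ∂P) - (∫ ω, Z' ω i ∂P')|) ≤
        (P'' {ω | X ω = Y ω}).toReal := by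
  classical
  set B := (Fin j → Bool)
  set ζ : Ω → B := fun ω i => decide (Z ω i = 1) with hζdef
  set ζ' : Ω' → B := fun ω i => decide (Z' ω i = 1) with hζ'def
  have hζ : Measurable ζ := by
    apply measurable_pi_lambda
    intro i
    apply measurable_to_countable'
    intro y
    have hm : Measurable fun ω => Z ω i := (measurable_pi_apply i).comp hZ
    cases y with
    | true =>
      have : (fun ω => decide (Z ω i = 1)) ⁻¹' {true} = (fun ω => Z ω i) ⁻¹' {1} := by
        ext ω; simp
      rw [this]
      exact hm (measurableSet_singleton 1)
    | false =>
      have : (fun ω => decide (Z ω i = 1)) ⁻¹' {false} = ((fun ω => Z ω i) ⁻¹' {1})ᶜ := by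
        ext ω; simp
      rw [this]
      exact (hm (measurableSet_singleton 1)).compl
  have hζ' : Measurable ζ' := by
    apply measurable_pi_lambda
    intro i
    apply measurable_to_countable'
    intro y
    have hm : Measurable fun ω => Z' ω i := (measurable_pi_apply i).comp hZ'
    cases y with
    | true =>
      have : (fun ω => decide (Z' ω i = 1)) ⁻¹' {true} = (fun ω => Z' ω i) ⁻¹' {1} := by
        ext ω; simp
      rw [this]
      exact hm (measurableSet_singleton 1)
    | false =>
      have : (fun ω => decide (Z' ω i = 1)) ⁻¹' {false} = ((fun ω => Z' ω i) ⁻¹' {1})ᶜ := by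
        ext ω; simp
      rw [this]
      exact (hm (measurableSet_singleton 1)).compl
  have hZeq : ∀ ω, Z ω = iotaR (ζ ω) := by
    intro ω; funext i
    rcases hZ01 ω i with h | h <;> simp [iotaR, hζdef, h]
  have hZ'eq : ∀ ω, Z' ω = iotaR (ζ' ω) := by
    intro ω; funext i
    rcases hZ'01 ω i with h | h <;> simp [iotaR, hζ'def, h]
  have hι : Measurable (iotaR (j := j)) := measurable_of_countable _
  set p : Measure B := P.map ζ with hpdef
  set q : Measure B := P'.map ζ' with hqdef
  have hpprob : IsProbabilityMeasure p := Measure.isProbabilityMeasure_map hζ.aemeasurable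
  have hqprob : IsProbabilityMeasure q := Measure.isProbabilityMeasure_map hζ'.aemeasurable
  obtain ⟨m, hmprob, hmfst, hmsnd, hmineq⟩ := exists_coupling_discrete p q
  set pb : B → ℝ := fun b => (p {b}).toReal with hpbdef
  set qb : B → ℝ := fun b => (q {b}).toReal with hqbdef
  have hpb0 : ∀ b, 0 ≤ pb b := fun b => ENNReal.toReal_nonneg
  have hqb0 : ∀ b, 0 ≤ qb b := fun b => ENNReal.toReal_nonneg
  have hpfin : ∀ b : B, p {b} ≠ ⊤ := fun b => measure_ne_top p _
  have hqfin : ∀ b : B, q {b} ≠ ⊤ := fun b => measure_ne_top q _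
  have hpb1 : ∑ b : B, pb b = 1 := by
    rw [hpbdef, ← ENNReal.toReal_sum (fun b _ => hpfin b), sum_meas_singleton,
      measure_univ, ENNReal.toReal_one]
  have hqb1 : ∑ b : B, qb b = 1 := by
    rw [hqbdef, ← ENNReal.toReal_sum (fun b _ => hqfin b), sum_meas_singleton,
      measure_univ, ENNReal.toReal_one]
  -- integral identities
  have hintegral : ∀ (g : B → ℝ), ∫ ω, g (ζ ω) ∂P = ∑ b : B, pb b * g b := by
    intro g
    calc ∫ ω, g (ζ ω) ∂P
        = ∫ b, g b ∂p :=
          (integral_map hζ.aemeasurable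
            (Measurable.aestronglyMeasurable (measurable_of_countable g))).symm
      _ = ∑ b : B, pb b * g b := by
          rw [integral_fintype (Integrable.of_finite)]
          simp only [hpbdef, smul_eq_mul, measureReal_def]
  have hintegral' : ∀ (g : B → ℝ), ∫ ω, g (ζ' ω) ∂P' = ∑ b : B, qb b * g b := by
    intro g
    calc ∫ ω, g (ζ' ω) ∂P'
        = ∫ b, g b ∂q :=
          (integral_map hζ'.aemeasurable
            (Measurable.aestronglyMeasurable (measurable_of_countable g))).symm
      _ = ∑ b : B, qb b * g b := by
          rw [integral_fintype (Integrable.of_finite)]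
          simp only [hqbdef, smul_eq_mul, measureReal_def]
  have hint2 : ∀ k i : Fin j, ∫ ω, Z ω k * Z ω i ∂P = cw pb k i := by
    intro k i
    calc ∫ ω, Z ω k * Z ω i ∂P
        = ∫ ω, iotaR (ζ ω) k * iotaR (ζ ω) i ∂P :=
          integral_congr_ae (Filter.Eventually.of_forall fun ω =>
            show Z ω k * Z ω i = iotaR (ζ ω) k * iotaR (ζ ω) i by rw [hZeq ω])
      _ = ∑ b : B, pb b * (iotaR b k * iotaR b i) :=
          hintegral (fun b => iotaR b k * iotaR b i)
      _ = cw pb k i := ?_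
    unfold cw
    refine Finset.sum_congr rfl fun b _ => ?_
    congr 1
    by_cases h1 : b k = true <;> by_cases h2 : b i = true <;>
      simp [iotaR, indR, h1, h2]
  have hint2' : ∀ k i : Fin j, ∫ ω, Z' ω k * Z' ω i ∂P' = cw qb k i := by
    intro k i
    calc ∫ ω, Z' ω k * Z' ω i ∂P'
        = ∫ ω, iotaR (ζ' ω) k * iotaR (ζ' ω) i ∂P' :=
          integral_congr_ae (Filter.Eventually.of_forall fun ω =>
            show Z' ω k * Z' ω i = iotaR (ζ' ω) k * iotaR (ζ' ω) i by rw [hZ'eq ω])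
      _ = ∑ b : B, qb b * (iotaR b k * iotaR b i) :=
          hintegral' (fun b => iotaR b k * iotaR b i)
      _ = cw qb k i := ?_
    unfold cw
    refine Finset.sum_congr rfl fun b _ => ?_
    congr 1
    by_cases h1 : b k = true <;> by_cases h2 : b i = true <;>
      simp [iotaR, indR, h1, h2]
  have hint1 : ∀ i : Fin j, ∫ ω, Z ω i ∂P = aw pb i := by
    intro i
    calc ∫ ω, Z ω i ∂P
        = ∫ ω, iotaR (ζ ω) i ∂P :=
          integral_congr_ae (Filter.Eventually.of_forall fun ω =>
            show Z ω i = iotaR (ζ ω) i by rw [hZeq ω])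
      _ = ∑ b : B, pb b * iotaR b i := hintegral (fun b => iotaR b i)
      _ = aw pb i := ?_
    unfold aw
    refine Finset.sum_congr rfl fun b _ => ?_
    by_cases h : b i = true <;> simp [iotaR, indR, h]
  have hint1' : ∀ i : Fin j, ∫ ω, Z' ω i ∂P' = aw qb i := by
    intro i
    calc ∫ ω, Z' ω i ∂P'
        = ∫ ω, iotaR (ζ' ω) i ∂P' :=
          integral_congr_ae (Filter.Eventually.of_forall fun ω =>
            show Z' ω i = iotaR (ζ' ω) i by rw [hZ'eq ω])
      _ = ∑ b : B, qb b * iotaR b i := hintegral' (fun b => iotaR b i)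
      _ = aw qb i := ?_
    unfold aw
    refine Finset.sum_congr rfl fun b _ => ?_
    by_cases h : b i = true <;> simp [iotaR, indR, h]
  -- the coupling data
  refine ⟨B × B, inferInstance, m, iotaR ∘ Prod.fst, iotaR ∘ Prod.snd, hmprob,
    (measurable_of_countable _), (measurable_of_countable _), ?_, ?_, ?_⟩
  · calc m.map (iotaR ∘ Prod.fst) = (m.map Prod.fst).map iotaR :=
          (Measure.map_map hι measurable_fst).symm
      _ = p.map iotaR := by rw [hmfst]
      _ = P.map (iotaR ∘ ζ) := Measure.map_map hι hζ
      _ = P.map Z := by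
          congr 1
          funext ω
          exact (hZeq ω).symm
  · calc m.map (iotaR ∘ Prod.snd) = (m.map Prod.snd).map iotaR :=
          (Measure.map_map hι measurable_snd).symm
      _ = q.map iotaR := by rw [hmsnd]
      _ = P'.map (iotaR ∘ ζ') := Measure.map_map hι hζ'
      _ = P'.map Z' := by
          congr 1
          funext ω
          exact (hZ'eq ω).symm
  · -- the inequality
    have hset : {ω : B × B | (iotaR ∘ Prod.fst) ω = (iotaR ∘ Prod.snd) ω}
        = {x : B × B | x.1 = x.2} := by
      ext x
      simp only [Set.mem_setOf_eq, Function.comp_apply]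
      exact ⟨fun h => iotaR_injective h, fun h => by rw [h]⟩
    rw [hset]
    set t : ℝ≥0∞ := ∑ b : B, (p {b} - q {b}) with htdef
    have htfin : t ≠ ⊤ := by
      rw [htdef]
      exact (ENNReal.sum_lt_top.mpr fun b _ =>
        tsub_le_self.trans_lt (measure_lt_top p _)).ne
    have hdfin : m {x : B × B | x.1 = x.2} ≠ ⊤ := measure_ne_top m _
    have httoReal : t.toReal = ∑ b : B, max (pb b - qb b) 0 := by
      rw [htdef, ENNReal.toReal_sum
        (fun b _ => (tsub_le_self.trans_lt (measure_lt_top p _)).ne)]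
      refine Finset.sum_congr rfl fun b _ => ?_
      rcases le_total (p {b}) (q {b}) with h | h
      · rw [tsub_eq_zero_of_le h]
        have : pb b ≤ qb b := ENNReal.toReal_mono (hqfin b) h
        rw [max_eq_right (by linarith)]
        simp
      · rw [ENNReal.toReal_sub_of_le h (hpfin b)]
        have : qb b ≤ pb b := ENNReal.toReal_mono (hpfin b) h
        rw [max_eq_left (by linarith [hpbdef, hqbdef])]
    have h1R : (1:ℝ) ≤ (m {x : B × B | x.1 = x.2}).toReal + t.toReal := by
      have hfin2 : m {x : B × B | x.1 = x.2} + t ≠ ⊤ := by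
        rw [ENNReal.add_ne_top]; exact ⟨hdfin, htfin⟩
      have := ENNReal.toReal_mono hfin2 hmineq
      rwa [ENNReal.toReal_one, ENNReal.toReal_add hdfin htfin] at this
    rw [httoReal] at h1R
    have hcore := core_ineq pb qb hpb0 hqb0 hpb1 hqb1
    have e1 : ∑ i : Fin j, ∑ k ∈ Finset.univ.erase i,
        ((∫ ω, Z ω k * Z ω i ∂P) + (∫ ω, Z' ω k * Z' ω i ∂P'))
        = ∑ i : Fin j, ∑ k ∈ Finset.univ.erase i, (cw pb k i + cw qb k i) := by
      refine Finset.sum_congr rfl fun i _ => Finset.sum_congr rfl fun k _ => ?_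
      rw [hint2 k i, hint2' k i]
    have e2 : ∑ i : Fin j, |(∫ ω, Z ω i ∂P) - (∫ ω, Z' ω i ∂P')|
        = ∑ i : Fin j, |aw pb i - aw qb i| := by
      refine Finset.sum_congr rfl fun i _ => ?_
      rw [hint1 i, hint1' i]
    rw [e1, e2]
    linarith

end Main
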